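/- Let 1 < p < ∞ and let C_p be the unique positive root of the equation (p−1)x^p − p x^{p−1} − 1 = 0. Let μ be a positive Borel measure on ℝ. Then for every μ-measurable function f on ℝ, ‖M_μ f‖_{L^{p,∞}(ℝ,dμ)} ≤ C_p ‖f‖_{L^{p,∞}(ℝ,dμ)}. -/

import Mathlib

set_option maxHeartbeats 1000000

open MeasureTheory Set ENNReal

/-- Symmetric decreasing rearrangement (w.r.t. the measure `μ`) of an
`ℝ≥0∞`-valued function `g` on `ℝ`:  `g*(x) = inf {t > 0 | μ {g > t} ≤ 2|x|}`. -/
noncomputable def rearrE (μ : Measure ℝ) (g : ℝ → ℝ≥0∞) (x : ℝ) : ℝ≥0∞ :=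
  sInf {t : ℝ≥0∞ | 0 < t ∧ μ {y | t < g y} ≤ ENNReal.ofReal (2 * |x|)}

/-- Symmetric decreasing rearrangement (w.r.t. `μ`) of a real-valued function:
`f*(x) = inf {t > 0 | μ {|f| > t} ≤ 2|x|}`. -/
noncomputable def rearr (μ : Measure ℝ) (f : ℝ → ℝ) (x : ℝ) : ℝ≥0∞ :=
  rearrE μ (fun y => ENNReal.ofReal |f y|) x

/-- Uncentered Hardy-Littlewood maximal function w.r.t. `μ` of an
`ℝ≥0∞`-valued function: the sup of averages over open intervals containing `x`
of positive `μ`-measure. -/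
noncomputable def maximalE (μ : Measure ℝ) (g : ℝ → ℝ≥0∞) (x : ℝ) : ℝ≥0∞ :=
  ⨆ (a : ℝ) (b : ℝ) (_ : x ∈ Ioo a b) (_ : 0 < μ (Ioo a b)),
    (μ (Ioo a b))⁻¹ * ∫⁻ y in Ioo a b, g y ∂μ

/-- Uncentered Hardy-Littlewood maximal function `M_μ f` of a real-valued `f`. -/
noncomputable def maximal (μ : Measure ℝ) (f : ℝ → ℝ) (x : ℝ) : ℝ≥0∞ :=
  maximalE μ (fun y => ENNReal.ofReal |f y|) x

/-- Weak `L^p` quasinorm w.r.t. `μ` of an `ℝ≥0∞`-valued function: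
`sup_{t>0} t · μ({g > t})^(1/p)`. -/
noncomputable def wnormE (μ : Measure ℝ) (g : ℝ → ℝ≥0∞) (p : ℝ) : ℝ≥0∞ :=
  ⨆ (t : ℝ) (_ : 0 < t), ENNReal.ofReal t * μ {x | ENNReal.ofReal t < g x} ^ (1 / p)

/-- Weak `L^p` quasinorm `‖f‖_{L^{p,∞}(ℝ,dμ)} = sup_{t>0} t · μ({|f| > t})^(1/p)`. -/
noncomputable def wnorm' (μ : Measure ℝ) (f : ℝ → ℝ) (p : ℝ) : ℝ≥0∞ :=
  wnormE μ (fun x => ENNReal.ofReal |f x|) p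

/-- `f` is distributionally symmetric: for every `t > 0` the sets
`{x > 0 | f x > t}` and `{x < 0 | f x > t}` have the same Lebesgue measure. -/
def DistribSymm (f : ℝ → ℝ) : Prop :=
  ∀ t : ℝ, 0 < t → volume {x | 0 < x ∧ t < f x} = volume {x | x < 0 ∧ t < f x}


lemma L1 {x α : ℝ} (hx : 0 ≤ x) (h0 : 0 ≤ α) (h1 : α ≤ 1) :
    x ^ α ≤ 1 + α * (x - 1) := by
  have := rpow_one_add_le_one_add_mul_self (s := x - 1) (by linarith) h0 h1
  simpa using this

lemma L2 {p C : ℝ} (hp : 1 < p) (hC : 0 < C)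
    (hroot : (p - 1) * C ^ p - p * C ^ (p - 1) - 1 = 0)
    {θ : ℝ} (hθ : 0 ≤ θ) :
    p * (1 + θ ^ ((p - 1) / p)) ≤ (p - 1) * C * (1 + θ) := by
  have hp0 : (0:ℝ) < p := by linarith
  set α : ℝ := (p - 1) / p with hα
  have hα0 : 0 ≤ α := div_nonneg (by linarith) hp0.le
  have hα1 : α ≤ 1 := by rw [hα, div_le_one hp0]; linarith
  set θs : ℝ := C ^ (-p) with hθs
  have hθs0 : 0 < θs := Real.rpow_pos_of_pos hC _
  have key : θ ^ α ≤ θs ^ α * (1 + α * (θ / θs - 1)) := by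
    have h2 := L1 (x := θ / θs) (by positivity) hα0 hα1
    have h3 : (θ / θs) ^ α = θ ^ α / θs ^ α := Real.div_rpow hθ hθs0.le α
    have := mul_le_mul_of_nonneg_left h2 (Real.rpow_nonneg hθs0.le α)
    rw [h3, mul_div_cancel₀] at this
    · exact this
    · exact (Real.rpow_pos_of_pos hθs0 α).ne'
  have hmul : -p * α = 1 - p := by rw [hα]; field_simp; ring
  have hθsα : θs ^ α = C ^ (1 - p) := by
    rw [hθs, ← Real.rpow_mul hC.le, hmul]
  have hθsα1 : θs ^ α / θs = C := by
    rw [hθsα, hθs, ← Real.rpow_sub hC]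
    have h : (1 - p) - (-p) = (1:ℝ) := by ring
    rw [h, Real.rpow_one]
  -- rewrite key's RHS:  θs^α + α (θs^α/θs) (θ - θs)
  have key2 : θ ^ α ≤ C ^ (1 - p) + α * C * (θ - θs) := by
    calc θ ^ α ≤ θs ^ α * (1 + α * (θ / θs - 1)) := key
    _ = θs ^ α + α * (θs ^ α / θs) * (θ - θs) := by field_simp
    _ = C ^ (1 - p) + α * C * (θ - θs) := by rw [hθsα1, hθsα]
  -- now conclude
  have hCp : C ^ (1 - p) * C ^ (p - 1) = 1 := by
    rw [← Real.rpow_add hC]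
    have h : (1 - p) + (p - 1) = 0 := by ring
    rw [h, Real.rpow_zero]
  have hCpow : C * C ^ (p - 1) = C ^ p := by
    nth_rewrite 1 [← Real.rpow_one C]
    rw [← Real.rpow_add hC]
    have h : (1:ℝ) + (p - 1) = p := by ring
    rw [h]
  -- p + C^(1-p) ≤ (p-1) C : multiply by C^(p-1) > 0
  have hCp1 : (0:ℝ) < C ^ (p - 1) := Real.rpow_pos_of_pos hC _
  have hkey3 : p + C ^ (1 - p) ≤ (p - 1) * C := by
    rw [← mul_le_mul_iff_of_pos_right hCp1]
    have heq : (p + C ^ (1 - p)) * C ^ (p - 1) = (p - 1) * C * C ^ (p - 1) := by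
      calc (p + C ^ (1 - p)) * C ^ (p - 1) = p * C ^ (p - 1) + C ^ (1 - p) * C ^ (p - 1) := by ring
      _ = p * C ^ (p - 1) + 1 := by rw [hCp]
      _ = (p - 1) * C ^ p := by linarith
      _ = (p - 1) * C * C ^ (p - 1) := by rw [mul_assoc, hCpow]
    exact heq.le
  have hslope : p * α = (p - 1) := by rw [hα]; field_simp
  have hCθs : (p - 1) * C * θs = (p-1) * C ^ (1-p) := by
    have h4 : C * C ^ (-p) = C ^ (1 - p) := by
      nth_rewrite 1 [← Real.rpow_one C]
      rw [← Real.rpow_add hC]; norm_num [sub_eq_add_neg]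
    rw [hθs, mul_assoc, h4]
  have := mul_le_mul_of_nonneg_left key2 hp0.le
  -- p θ^α ≤ p C^(1-p) + pα C (θ - θs) = p C^(1-p) + (p-1) C θ - (p-1) C θs
  have expand : p * (C ^ (1 - p) + α * C * (θ - θs)) =
      p * C ^ (1-p) + (p-1) * C * θ - (p-1) * C ^ (1-p) := by
    have h1 : p * (α * C * (θ - θs)) = (p * α) * C * θ - (p * α) * C * θs := by ring
    rw [mul_add, h1, hslope]
    linarith [hCθs]
  nlinarith [this, expand]

lemma L3 {p C : ℝ} (hp : 1 < p) (hC : 0 < C)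
    (hroot : (p - 1) * C ^ p - p * C ^ (p - 1) - 1 = 0)
    {s a m q : ℝ} (hs : 0 < s) (ha : 0 ≤ a) (hq0 : 0 ≤ q) (hqm : q ≤ m)
    (hmain : s * (m + q) ≤ p / (p - 1) * a * (m ^ ((p - 1) / p) + q ^ ((p - 1) / p))) :
    s * m ^ (1 / p) ≤ C * a := by
  have hp0 : (0:ℝ) < p := by linarith
  have hp1 : (0:ℝ) < p - 1 := by linarith
  set α : ℝ := (p - 1) / p with hα
  rcases eq_or_lt_of_le (hq0.trans hqm) with hm0 | hm0
  · rw [← hm0, Real.zero_rpow (by positivity : 1/p ≠ 0), mul_zero]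
    positivity
  · set θ : ℝ := q / m with hθdef
    have hθ0 : 0 ≤ θ := div_nonneg hq0 hm0.le
    have hqθ : q = θ * m := by rw [hθdef]; field_simp
    have hqα : q ^ α = θ ^ α * m ^ α := by
      rw [hqθ]; exact Real.mul_rpow hθ0 hm0.le
    have hsum : m ^ α + q ^ α = m ^ α * (1 + θ ^ α) := by rw [hqα]; ring
    have hmq : m + q = m * (1 + θ) := by rw [hqθ]; ring
    have hL2 := L2 hp hC hroot hθ0
    have hmα : (0:ℝ) < m ^ α := Real.rpow_pos_of_pos hm0 α
    -- RHS ≤ a C m^α (1+θ)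
    have h1 : p / (p - 1) * a * (m ^ α + q ^ α) ≤ C * a * (m ^ α * (1 + θ)) := by
      rw [hsum]
      have h2 : p * (1 + θ ^ α) ≤ (p - 1) * C * (1 + θ) := hL2
      have h3 : p / (p - 1) * (1 + θ ^ α) ≤ C * (1 + θ) := by
        rw [div_mul_eq_mul_div, div_le_iff₀ hp1]
        nlinarith
      calc p / (p - 1) * a * (m ^ α * (1 + θ ^ α))
          = (p / (p - 1) * (1 + θ ^ α)) * (a * m ^ α) := by ring
        _ ≤ (C * (1 + θ)) * (a * m ^ α) := by
            apply mul_le_mul_of_nonneg_right h3 (by positivity)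
        _ = C * a * (m ^ α * (1 + θ)) := by ring
    have h4 : s * (m * (1 + θ)) ≤ C * a * (m ^ α * (1 + θ)) := by
      rw [← hmq]; exact hmain.trans h1
    have h6 : (0:ℝ) < 1 + θ := by linarith
    have h5 : s * m ≤ C * a * m ^ α := by
      have h7 : s * m * (1 + θ) ≤ C * a * m ^ α * (1 + θ) := by
        calc s * m * (1 + θ) = s * (m * (1 + θ)) := by ring
          _ ≤ C * a * (m ^ α * (1 + θ)) := h4
          _ = C * a * m ^ α * (1 + θ) := by ring
      exact le_of_mul_le_mul_right h7 h6
    -- m = m^α * m^(1/p)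
    have hsplit : m = m ^ α * m ^ (1/p) := by
      rw [← Real.rpow_add hm0]
      have h : α + 1/p = 1 := by rw [hα]; field_simp; ring
      rw [h, Real.rpow_one]
    have h8 : s * m ^ (1/p) * m ^ α ≤ C * a * m ^ α := by
      calc s * m ^ (1/p) * m ^ α = s * m := by rw [mul_assoc, mul_comm (m ^ (1/p)), ← hsplit]
        _ ≤ C * a * m ^ α := h5
    exact le_of_mul_le_mul_right h8 hmα

lemma L4 {p : ℝ} (hp : 1 < p) (μ : Measure ℝ) {f : ℝ → ℝ} (hf : Measurable f)
    {A : ℝ≥0∞} (hA : A ≠ ⊤)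
    (hweak : ∀ t : ℝ, 0 < t → μ {y | t < |f y|} ≤ (A / ENNReal.ofReal t) ^ p)
    {S : Set ℝ} (hS : MeasurableSet S) (hSfin : μ S ≠ ⊤) :
    ∫⁻ y in S, ENNReal.ofReal |f y| ∂μ ≤
      ENNReal.ofReal (p / (p - 1)) * A * μ S ^ ((p - 1) / p) := by
  have hp0 : (0:ℝ) < p := by linarith
  have hp1 : (0:ℝ) < p - 1 := by linarith
  set α : ℝ := (p - 1) / p with hα
  have hfabs : Measurable fun y => |f y| := hf.abs
  have hlayer : ∫⁻ y in S, ENNReal.ofReal |f y| ∂μ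
      = ∫⁻ t in Ioi (0:ℝ), (μ.restrict S) {a | t < |f a|} := by
    exact lintegral_eq_lintegral_meas_lt (μ.restrict S)
      (Filter.Eventually.of_forall fun y => abs_nonneg _) hfabs.aemeasurable
  have hsetm : ∀ t : ℝ, MeasurableSet {a | t < |f a|} := fun t =>
    measurableSet_lt measurable_const hfabs
  have hres : ∀ t : ℝ, (μ.restrict S) {a | t < |f a|} = μ ({a | t < |f a|} ∩ S) := fun t =>
    Measure.restrict_apply (hsetm t)
  -- trivial cases
  rcases eq_or_ne A 0 with hA0 | hA0
  · have hz : ∀ t ∈ Ioi (0:ℝ), (μ.restrict S) {a | t < |f a|} ≤ 0 := by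
      intro t ht
      have h1 := hweak t ht
      rw [hA0, ENNReal.zero_div, ENNReal.zero_rpow_of_pos hp0] at h1
      rw [hres t]
      exact (measure_mono inter_subset_left).trans h1
    rw [hlayer]
    refine le_trans ((setLIntegral_mono' measurableSet_Ioi hz).trans ?_) zero_le
    simp
  rcases eq_or_ne (μ S) 0 with hm0 | hm0
  · have hz : ∀ t ∈ Ioi (0:ℝ), (μ.restrict S) {a | t < |f a|} ≤ 0 := by
      intro t ht
      rw [hres t, ← hm0]
      exact measure_mono inter_subset_right
    rw [hlayer]
    refine le_trans ((setLIntegral_mono' measurableSet_Ioi hz).trans ?_) zero_le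
    simp
  -- main case
  set m : ℝ≥0∞ := μ S with hm
  have hminv : m ^ (-(1/p)) ≠ ⊤ := by
    rw [ENNReal.rpow_neg, ne_eq, ENNReal.inv_eq_top]
    intro h
    have h2 : m = 0 ∧ 0 < p := by simpa [ENNReal.rpow_eq_zero_iff, hSfin] using h
    exact hm0 h2.1
  have hminv0 : m ^ (-(1/p)) ≠ 0 := by
    rw [ENNReal.rpow_neg, ne_eq, ENNReal.inv_eq_zero]
    exact ENNReal.rpow_ne_top_of_nonneg (by positivity) hSfin
  set b : ℝ := (A * m ^ (-(1/p))).toReal with hbdef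
  have hbne : A * m ^ (-(1/p)) ≠ ⊤ := ENNReal.mul_ne_top hA hminv
  have hbor : ENNReal.ofReal b = A * m ^ (-(1/p)) := ENNReal.ofReal_toReal hbne
  have hb0 : 0 < b := ENNReal.toReal_pos (mul_ne_zero hA0 hminv0) hbne
  rw [hlayer]
  have hsplit : Ioi (0:ℝ) = Ioc 0 b ∪ Ioi b := (Ioc_union_Ioi_eq_Ioi hb0.le).symm
  rw [hsplit, lintegral_union measurableSet_Ioi Ioc_disjoint_Ioi_same]
  have hbound1 : ∫⁻ t in Ioc (0:ℝ) b, (μ.restrict S) {a | t < |f a|} ∂volume ≤ m * ENNReal.ofReal b := by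
    calc ∫⁻ t in Ioc (0:ℝ) b, (μ.restrict S) {a | t < |f a|} ∂volume
        ≤ ∫⁻ _ in Ioc (0:ℝ) b, m ∂volume := by
          refine setLIntegral_mono' measurableSet_Ioc fun t ht => ?_
          rw [hres t]; exact measure_mono inter_subset_right
      _ = m * ENNReal.ofReal b := by
          rw [setLIntegral_const, Real.volume_Ioc]; norm_num
  have hbound2 : ∫⁻ t in Ioi b, (μ.restrict S) {a | t < |f a|} ∂volume
      ≤ A ^ p * ENNReal.ofReal (b ^ (1 - p) / (p - 1)) := by
    have hpt : ∀ t ∈ Ioi b, (μ.restrict S) {a | t < |f a|} ≤ A ^ p * ENNReal.ofReal (t ^ (-p)) := by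
      intro t ht
      have htpos : 0 < t := hb0.trans ht
      have h1 : (μ.restrict S) {a | t < |f a|} ≤ (A / ENNReal.ofReal t) ^ p := by
        rw [hres t]
        exact (measure_mono inter_subset_left).trans (hweak t htpos)
      refine h1.trans (le_of_eq ?_)
      rw [ENNReal.div_rpow_of_nonneg _ _ hp0.le, div_eq_mul_inv, ← ENNReal.rpow_neg,
        ← ENNReal.ofReal_rpow_of_pos htpos]
    calc ∫⁻ t in Ioi b, (μ.restrict S) {a | t < |f a|} ∂volume
        ≤ ∫⁻ t in Ioi b, A ^ p * ENNReal.ofReal (t ^ (-p)) ∂volume := by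
          refine setLIntegral_mono (by measurability) hpt
      _ = A ^ p * ∫⁻ t in Ioi b, ENNReal.ofReal (t ^ (-p)) ∂volume := by
          rw [lintegral_const_mul _ (by measurability)]
      _ = A ^ p * ENNReal.ofReal (b ^ (1 - p) / (p - 1)) := by
          congr 1
          rw [← ofReal_integral_eq_lintegral_ofReal
            (integrableOn_Ioi_rpow_of_lt (by linarith) hb0)
            ((ae_restrict_iff' measurableSet_Ioi).2 (Filter.Eventually.of_forall
              (fun t ht => Real.rpow_nonneg (hb0.trans ht).le _)))]
          congr 1
          rw [integral_Ioi_rpow_of_lt (by linarith) hb0]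
          rw [show -p + 1 = 1 - p by ring]
          have h9 : (1:ℝ) - p ≠ 0 := by linarith
          have h10 : (p:ℝ) - 1 ≠ 0 := by linarith
          field_simp
          ring
  refine (add_le_add hbound1 hbound2).trans (le_of_eq ?_)
  -- algebra: m * ofReal b + A^p * ofReal(b^(1-p)/(p-1)) = ofReal(p/(p-1)) * A * m^α
  have hmne : m ≠ ⊤ := hSfin
  have T1 : m * ENNReal.ofReal b = A * m ^ α := by
    rw [hbor]
    calc m * (A * m ^ (-(1/p))) = A * (m ^ (1:ℝ) * m ^ (-(1/p))) := by
          rw [ENNReal.rpow_one]; ring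
      _ = A * m ^ α := by
          rw [← ENNReal.rpow_add _ _ hm0 hmne]
          have he : (1:ℝ) + -(1/p) = α := by
            rw [hα]; field_simp; ring
          rw [he]
  have T2 : A ^ p * ENNReal.ofReal (b ^ (1 - p) / (p - 1)) =
      A * m ^ α * ENNReal.ofReal (1 / (p - 1)) := by
    have h1 : ENNReal.ofReal (b ^ (1 - p) / (p - 1)) =
        ENNReal.ofReal (b ^ (1 - p)) * ENNReal.ofReal (1 / (p - 1)) := by
      rw [← ENNReal.ofReal_mul (by positivity)]
      congr 1; field_simp
    have h2 : ENNReal.ofReal (b ^ (1 - p)) = (A * m ^ (-(1/p))) ^ (1 - p) := by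
      rw [← hbor, ← ENNReal.ofReal_rpow_of_pos hb0]
    have h3 : (A * m ^ (-(1/p))) ^ (1 - p) = A ^ (1 - p) * m ^ α := by
      rw [ENNReal.mul_rpow_of_ne_top hA hminv, ← ENNReal.rpow_mul]
      have he : -(1/p) * (1 - p) = α := by
        rw [hα]; field_simp; ring
      rw [he]
    have h4 : A ^ p * A ^ (1 - p) = A := by
      rw [← ENNReal.rpow_add _ _ hA0 hA]
      norm_num
    rw [h1, h2, h3]
    calc A ^ p * (A ^ (1 - p) * m ^ α * ENNReal.ofReal (1 / (p - 1)))
        = (A ^ p * A ^ (1 - p)) * m ^ α * ENNReal.ofReal (1 / (p - 1)) := by ring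
      _ = A * m ^ α * ENNReal.ofReal (1 / (p - 1)) := by rw [h4]
  rw [T1, T2]
  have h5 : ENNReal.ofReal (p / (p - 1)) = 1 + ENNReal.ofReal (1 / (p - 1)) := by
    have h6 : p / (p - 1) = 1 + 1 / (p - 1) := by field_simp; ring
    rw [h6, ENNReal.ofReal_add (by norm_num) (by positivity), ENNReal.ofReal_one]
  rw [h5]
  ring

-- removal lemma: among three distinct intervals with a common point, one is
-- contained in the union of (at most) two others
lemma Ltriple (a b c : ℝ × ℝ) (hab : a ≠ b) (hac : a ≠ c) (hbc : b ≠ c) (x : ℝ)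
    (hxa : x ∈ Ioo a.1 a.2) (hxb : x ∈ Ioo b.1 b.2) (hxc : x ∈ Ioo c.1 c.2) :
    ∃ J U V : ℝ × ℝ, J ∈ ({a, b, c} : Finset (ℝ × ℝ)) ∧
      U ∈ ({a, b, c} : Finset (ℝ × ℝ)) ∧ V ∈ ({a, b, c} : Finset (ℝ × ℝ)) ∧
      J ≠ U ∧ J ≠ V ∧ Ioo J.1 J.2 ⊆ Ioo U.1 U.2 ∪ Ioo V.1 V.2 := by
  classical
  set T : Finset (ℝ × ℝ) := {a, b, c} with hT
  have hxT : ∀ w ∈ T, x ∈ Ioo w.1 w.2 := by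
    intro w hw
    simp only [hT, Finset.mem_insert, Finset.mem_singleton] at hw
    rcases hw with rfl | rfl | rfl <;> assumption
  have haT : a ∈ T := by simp [hT]
  have hbT : b ∈ T := by simp [hT]
  have hcT : c ∈ T := by simp [hT]
  obtain ⟨u, huT, humin⟩ := T.exists_min_image (fun w => w.1) ⟨a, haT⟩
  obtain ⟨v, hvT, hvmax⟩ := T.exists_max_image (fun w => w.2) ⟨a, haT⟩
  by_cases huv : u = v
  · -- all intervals contained in Ioo u
    obtain ⟨J, hJT, hJu⟩ : ∃ J ∈ T, J ≠ u := by
      by_cases hau : a = u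
      · exact ⟨b, hbT, fun h => hab (hau.trans h.symm)⟩
      · exact ⟨a, haT, hau⟩
    refine ⟨J, u, u, hJT, huT, huT, hJu, hJu, ?_⟩
    intro y hy
    left
    constructor
    · exact lt_of_le_of_lt (humin J hJT) hy.1
    · exact lt_of_lt_of_le hy.2 (huv ▸ hvmax J hJT)
  · -- pick the third element
    obtain ⟨J, hJT, hJu, hJv⟩ : ∃ J ∈ T, J ≠ u ∧ J ≠ v := by
      by_cases hau : a = u
      · by_cases hbv : b = v
        · refine ⟨c, hcT, ?_, ?_⟩
          · rw [← hau]; exact fun h => hac h.symm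
          · rw [← hbv]; exact fun h => hbc h.symm
        · by_cases hbu : b = u
          · exact absurd (hau.trans hbu.symm) hab
          · by_cases hav : a = v
            · exact absurd (hau.symm.trans hav) huv
            · refine ⟨b, hbT, hbu, hbv⟩
      · by_cases hav : a = v
        · by_cases hbu : b = u
          · refine ⟨c, hcT, ?_, ?_⟩
            · rw [← hbu]; exact fun h => hbc h.symm
            · rw [← hav]; exact fun h => hac h.symm
          · exact ⟨b, hbT, hbu, fun h => hab (h.trans hav.symm).symm⟩
        · exact ⟨a, haT, hau, hav⟩
    refine ⟨J, u, v, hJT, huT, hvT, hJu, hJv, ?_⟩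
    intro y hy
    by_cases hyu : y < u.2
    · left
      exact ⟨lt_of_le_of_lt (humin J hJT) hy.1, hyu⟩
    · right
      constructor
      · calc v.1 < x := (hxT v hvT).1
          _ < u.2 := (hxT u huT).2
          _ ≤ y := le_of_not_gt hyu
      · exact lt_of_lt_of_le hy.2 (hvmax J hJT)

open Classical in
lemma Lselect : ∀ (n : ℕ) (F : Finset (ℝ × ℝ)), F.card ≤ n →
    ∃ S : Finset (ℝ × ℝ), S ⊆ F ∧
      (⋃ q ∈ S, Ioo q.1 q.2) = (⋃ q ∈ F, Ioo q.1 q.2) ∧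
      ∀ x : ℝ, (S.filter (fun q => x ∈ Ioo q.1 q.2)).card ≤ 2 := by
  intro n
  induction n with
  | zero =>
    intro F hF
    refine ⟨F, Finset.Subset.refl F, rfl, fun x => ?_⟩
    have : F = ∅ := Finset.card_eq_zero.1 (Nat.le_zero.1 hF)
    simp [this]
  | succ n ih =>
    intro F hF
    by_cases hgood : ∀ x : ℝ, (F.filter (fun q => x ∈ Ioo q.1 q.2)).card ≤ 2
    · exact ⟨F, Finset.Subset.refl F, rfl, hgood⟩
    · push_neg at hgood
      obtain ⟨x, hx⟩ := hgood
      rw [Finset.two_lt_card] at hx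
      obtain ⟨a, ha, b, hb, c, hc, hab, hac, hbc⟩ := hx
      rw [Finset.mem_filter] at ha hb hc
      obtain ⟨J, U, V, hJ, hU, hV, hJU, hJV, hsub⟩ :=
        Ltriple a b c hab hac hbc x ha.2 hb.2 hc.2
      have hmem : ∀ w ∈ ({a, b, c} : Finset (ℝ × ℝ)), w ∈ F := by
        intro w hw
        simp only [Finset.mem_insert, Finset.mem_singleton] at hw
        rcases hw with rfl | rfl | rfl
        exacts [ha.1, hb.1, hc.1]
      set F' : Finset (ℝ × ℝ) := F.erase J with hF'
      have hcard : F'.card ≤ n := by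
        have h1 : F'.card < F.card := Finset.card_erase_lt_of_mem (hmem J hJ)
        omega
      obtain ⟨S, hSsub, hSun, hScard⟩ := ih F' hcard
      refine ⟨S, hSsub.trans (Finset.erase_subset _ _), ?_, hScard⟩
      rw [hSun]
      apply Set.Subset.antisymm
      · exact Set.biUnion_subset_biUnion_left (fun w hw => (Finset.erase_subset _ _) hw)
      · intro y hy
        rw [Set.mem_iUnion₂] at hy
        obtain ⟨w, hwF, hyw⟩ := hy
        by_cases hwJ : w = J
        · subst hwJ
          rcases hsub hyw with h | h
          · exact Set.mem_biUnion (Finset.mem_erase.2 ⟨(hJU ∘ Eq.symm), hmem U hU⟩) h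
          · exact Set.mem_biUnion (Finset.mem_erase.2 ⟨(hJV ∘ Eq.symm), hmem V hV⟩) h
        · exact Set.mem_biUnion (Finset.mem_erase.2 ⟨hwJ, hwF⟩) hyw

open Classical in
lemma Lcore {p C : ℝ} (hp : 1 < p) (hC : 0 < C)
    (hroot : (p - 1) * C ^ p - p * C ^ (p - 1) - 1 = 0)
    (μ : Measure ℝ) {f : ℝ → ℝ} (hf : Measurable f) {A : ℝ≥0∞} (hA : A ≠ ⊤)
    (hweak : ∀ t : ℝ, 0 < t → μ {y | t < |f y|} ≤ (A / ENNReal.ofReal t) ^ p)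
    {s : ℝ} (hs : 0 < s) (F : Finset (ℝ × ℝ))
    (hF : ∀ q ∈ F, μ (Ioo q.1 q.2) ≠ 0 ∧ μ (Ioo q.1 q.2) ≠ ⊤ ∧
      ENNReal.ofReal s * μ (Ioo q.1 q.2) ≤ ∫⁻ y in Ioo q.1 q.2, ENNReal.ofReal |f y| ∂μ) :
    μ (⋃ q ∈ F, Ioo q.1 q.2) ≤ (ENNReal.ofReal C * A / ENNReal.ofReal s) ^ p := by
  have hp0 : (0:ℝ) < p := by linarith
  have hp1 : (0:ℝ) < p - 1 := by linarith
  set α : ℝ := (p - 1) / p with hα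
  set g : ℝ → ℝ≥0∞ := fun y => ENNReal.ofReal |f y| with hg
  have hgm : Measurable g := by
    apply ENNReal.measurable_ofReal.comp hf.abs
  obtain ⟨S, hSF, hSun, hScard⟩ := Lselect F.card F le_rfl
  set U : Set ℝ := ⋃ q ∈ S, Ioo q.1 q.2 with hU
  set O : Set ℝ := ⋃ q ∈ S, ⋃ r ∈ S.erase q, (Ioo q.1 q.2 ∩ Ioo r.1 r.2) with hO
  have hUm : MeasurableSet U :=
    S.finite_toSet.measurableSet_biUnion (fun q _ => measurableSet_Ioo)
  have hOm : MeasurableSet O :=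
    S.finite_toSet.measurableSet_biUnion (fun q _ =>
      (S.erase q).finite_toSet.measurableSet_biUnion (fun r _ =>
        measurableSet_Ioo.inter measurableSet_Ioo))
  have hOU : O ⊆ U := by
    intro y hy
    rw [hO, Set.mem_iUnion₂] at hy
    obtain ⟨q, hq, hy2⟩ := hy
    rw [Set.mem_iUnion₂] at hy2
    obtain ⟨r, hr, hy3⟩ := hy2
    exact Set.mem_biUnion hq hy3.1
  have hUfin : μ U ≠ ⊤ := by
    refine ne_top_of_le_ne_top ?_ (measure_biUnion_finset_le S _)
    rw [← lt_top_iff_ne_top]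
    exact ENNReal.sum_lt_top.2 (fun q hq => lt_top_iff_ne_top.2 (hF q (hSF hq)).2.1)
  have hOfin : μ O ≠ ⊤ := ne_top_of_le_ne_top hUfin (measure_mono hOU)
  -- multiplicity function facts
  have hcard_eq : ∀ x : ℝ, (∑ q ∈ S, (Ioo q.1 q.2).indicator (1 : ℝ → ℝ≥0∞) x)
      = ((S.filter (fun q => x ∈ Ioo q.1 q.2)).card : ℝ≥0∞) := by
    intro x
    rw [Finset.card_filter]
    push_cast
    apply Finset.sum_congr rfl
    intro q hq
    by_cases h : x ∈ Ioo q.1 q.2 <;> simp [Set.indicator_apply, h]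
  have hmemU : ∀ x : ℝ, x ∈ U ↔ ∃ q ∈ S, x ∈ Ioo q.1 q.2 := by
    intro x; rw [hU, Set.mem_iUnion₂]; tauto
  have hmemO : ∀ x : ℝ, 1 < (S.filter (fun q => x ∈ Ioo q.1 q.2)).card → x ∈ O := by
    intro x hx
    obtain ⟨q, hq, r, hr, hqr⟩ := Finset.one_lt_card.1 hx
    rw [Finset.mem_filter] at hq hr
    rw [hO, Set.mem_iUnion₂]
    refine ⟨q, hq.1, ?_⟩
    rw [Set.mem_iUnion₂]
    exact ⟨r, Finset.mem_erase.2 ⟨fun h => hqr h.symm, hr.1⟩, hq.2, hr.2⟩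
  have hmemO' : ∀ x ∈ O, 1 < (S.filter (fun q => x ∈ Ioo q.1 q.2)).card := by
    intro x hx
    rw [hO, Set.mem_iUnion₂] at hx
    obtain ⟨q, hq, hx2⟩ := hx
    rw [Set.mem_iUnion₂] at hx2
    obtain ⟨r, hr, hx3⟩ := hx2
    rw [Finset.mem_erase] at hr
    refine Finset.one_lt_card.2 ⟨q, ?_, r, ?_, fun h => hr.1 h.symm⟩
    · exact Finset.mem_filter.2 ⟨hq, hx3.1⟩
    · exact Finset.mem_filter.2 ⟨hr.2, hx3.2⟩
  -- key1 : μ U + μ O ≤ ∑ μ (Ioo q)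
  have key1 : μ U + μ O ≤ ∑ q ∈ S, μ (Ioo q.1 q.2) := by
    have hind : ∀ x : ℝ, U.indicator (1 : ℝ → ℝ≥0∞) x + O.indicator (1 : ℝ → ℝ≥0∞) x
        ≤ ∑ q ∈ S, (Ioo q.1 q.2).indicator (1 : ℝ → ℝ≥0∞) x := by
      intro x
      rw [hcard_eq x]
      by_cases hxO : x ∈ O
      · have h2 := hmemO' x hxO
        rw [Set.indicator_of_mem hxO, Set.indicator_of_mem (hOU hxO)]
        have h3 : (2:ℝ≥0∞) ≤ ((S.filter (fun q => x ∈ Ioo q.1 q.2)).card : ℝ≥0∞) := by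
          exact_mod_cast h2
        calc (1:ℝ≥0∞) + 1 = 2 := one_add_one_eq_two
          _ ≤ _ := h3
      · rw [Set.indicator_of_notMem hxO, add_zero]
        by_cases hxU : x ∈ U
        · rw [Set.indicator_of_mem hxU]
          obtain ⟨q, hq, hxq⟩ := (hmemU x).1 hxU
          have h4 : 1 ≤ (S.filter (fun q => x ∈ Ioo q.1 q.2)).card :=
            Finset.card_pos.2 ⟨q, Finset.mem_filter.2 ⟨hq, hxq⟩⟩
          have h5 : (1:ℝ≥0∞) ≤ ((S.filter (fun q => x ∈ Ioo q.1 q.2)).card : ℝ≥0∞) := by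
            exact_mod_cast h4
          simpa using h5
        · rw [Set.indicator_of_notMem hxU]
          exact zero_le
    calc μ U + μ O
        = (∫⁻ x, U.indicator (1 : ℝ → ℝ≥0∞) x ∂μ) + ∫⁻ x, O.indicator (1 : ℝ → ℝ≥0∞) x ∂μ := by
          rw [lintegral_indicator_one hUm, lintegral_indicator_one hOm]
      _ = ∫⁻ x, (U.indicator (1 : ℝ → ℝ≥0∞) x + O.indicator (1 : ℝ → ℝ≥0∞) x) ∂μ := by
          rw [lintegral_add_left (measurable_one.indicator hUm)]
      _ ≤ ∫⁻ x, ∑ q ∈ S, (Ioo q.1 q.2).indicator (1 : ℝ → ℝ≥0∞) x ∂μ :=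
          lintegral_mono hind
      _ = ∑ q ∈ S, ∫⁻ x, (Ioo q.1 q.2).indicator (1 : ℝ → ℝ≥0∞) x ∂μ :=
          lintegral_finset_sum S (fun q _ => measurable_one.indicator measurableSet_Ioo)
      _ = ∑ q ∈ S, μ (Ioo q.1 q.2) := by
          apply Finset.sum_congr rfl
          intro q hq
          rw [lintegral_indicator_one measurableSet_Ioo]
  -- key2 : ∑ ∫_Ioo g ≤ ∫_U g + ∫_O g
  have key2 : ∑ q ∈ S, ∫⁻ y in Ioo q.1 q.2, g y ∂μ ≤
      (∫⁻ y in U, g y ∂μ) + ∫⁻ y in O, g y ∂μ := by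
    have hind : ∀ x : ℝ, ∑ q ∈ S, (Ioo q.1 q.2).indicator g x
        ≤ U.indicator g x + O.indicator g x := by
      intro x
      have hsum : ∑ q ∈ S, (Ioo q.1 q.2).indicator g x
          = ((S.filter (fun q => x ∈ Ioo q.1 q.2)).card : ℝ≥0∞) * g x := by
        rw [Finset.card_filter]
        push_cast
        rw [Finset.sum_mul]
        apply Finset.sum_congr rfl
        intro q hq
        by_cases h : x ∈ Ioo q.1 q.2 <;> simp [Set.indicator_apply, h]
      rw [hsum]
      rcases Nat.lt_or_ge (S.filter (fun q => x ∈ Ioo q.1 q.2)).card 1 with h1 | h1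
      · interval_cases h : (S.filter (fun q => x ∈ Ioo q.1 q.2)).card
        · simp
      · rcases Nat.lt_or_ge (S.filter (fun q => x ∈ Ioo q.1 q.2)).card 2 with h2 | h2
        · have hcard1 : (S.filter (fun q => x ∈ Ioo q.1 q.2)).card = 1 := by omega
          rw [hcard1]
          obtain ⟨q, hq⟩ := Finset.card_eq_one.1 hcard1
          have hqS : q ∈ S.filter (fun q => x ∈ Ioo q.1 q.2) := by rw [hq]; simp
          rw [Finset.mem_filter] at hqS
          have hxU : x ∈ U := (hmemU x).2 ⟨q, hqS.1, hqS.2⟩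
          rw [Set.indicator_of_mem hxU]
          simpa using le_add_right (le_refl (g x))
        · have hcard2 : (S.filter (fun q => x ∈ Ioo q.1 q.2)).card = 2 := by
            have := hScard x; omega
          rw [hcard2]
          have hxO : x ∈ O := hmemO x (by omega)
          have hxU : x ∈ U := hOU hxO
          rw [Set.indicator_of_mem hxU, Set.indicator_of_mem hxO]
          rw [show ((2:ℕ):ℝ≥0∞) = 1 + 1 by norm_num, add_mul, one_mul]
    calc ∑ q ∈ S, ∫⁻ y in Ioo q.1 q.2, g y ∂μ
        = ∑ q ∈ S, ∫⁻ x, (Ioo q.1 q.2).indicator g x ∂μ := by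
          apply Finset.sum_congr rfl
          intro q hq
          rw [lintegral_indicator measurableSet_Ioo]
      _ = ∫⁻ x, ∑ q ∈ S, (Ioo q.1 q.2).indicator g x ∂μ :=
          (lintegral_finset_sum S (fun q _ => hgm.indicator measurableSet_Ioo)).symm
      _ ≤ ∫⁻ x, (U.indicator g x + O.indicator g x) ∂μ := lintegral_mono hind
      _ = (∫⁻ x, U.indicator g x ∂μ) + ∫⁻ x, O.indicator g x ∂μ :=
          lintegral_add_left (hgm.indicator hUm) _
      _ = (∫⁻ y in U, g y ∂μ) + ∫⁻ y in O, g y ∂μ := by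
          rw [lintegral_indicator hUm, lintegral_indicator hOm]
  -- key3 : combine
  have key3 : ENNReal.ofReal s * (μ U + μ O) ≤
      ENNReal.ofReal (p / (p - 1)) * A * (μ U) ^ α +
      ENNReal.ofReal (p / (p - 1)) * A * (μ O) ^ α := by
    calc ENNReal.ofReal s * (μ U + μ O)
        ≤ ENNReal.ofReal s * ∑ q ∈ S, μ (Ioo q.1 q.2) := mul_le_mul_right key1 _
      _ = ∑ q ∈ S, ENNReal.ofReal s * μ (Ioo q.1 q.2) := Finset.mul_sum _ _ _
      _ ≤ ∑ q ∈ S, ∫⁻ y in Ioo q.1 q.2, g y ∂μ :=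
          Finset.sum_le_sum (fun q hq => (hF q (hSF hq)).2.2)
      _ ≤ (∫⁻ y in U, g y ∂μ) + ∫⁻ y in O, g y ∂μ := key2
      _ ≤ ENNReal.ofReal (p / (p - 1)) * A * (μ U) ^ α +
          ENNReal.ofReal (p / (p - 1)) * A * (μ O) ^ α :=
          add_le_add (L4 hp μ hf hA hweak hUm hUfin) (L4 hp μ hf hA hweak hOm hOfin)
  -- convert to reals
  set a : ℝ := A.toReal with ha
  set m : ℝ := (μ U).toReal with hm
  set q' : ℝ := (μ O).toReal with hq'
  have ha0 : 0 ≤ a := ENNReal.toReal_nonneg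
  have hq'0 : 0 ≤ q' := ENNReal.toReal_nonneg
  have hq'm : q' ≤ m := ENNReal.toReal_mono hUfin (measure_mono hOU)
  have hreal : s * (m + q') ≤ p / (p - 1) * a * (m ^ α + q' ^ α) := by
    have hrhs_ne : ENNReal.ofReal (p / (p - 1)) * A * (μ U) ^ α +
        ENNReal.ofReal (p / (p - 1)) * A * (μ O) ^ α ≠ ⊤ := by
      apply ENNReal.add_ne_top.2
      constructor <;>
      · apply ENNReal.mul_ne_top (ENNReal.mul_ne_top ENNReal.ofReal_ne_top hA)
        exact ENNReal.rpow_ne_top_of_nonneg (by positivity) (by assumption)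
    have h := ENNReal.toReal_mono hrhs_ne key3
    rw [ENNReal.toReal_mul, ENNReal.toReal_add (ENNReal.mul_ne_top
        (ENNReal.mul_ne_top ENNReal.ofReal_ne_top hA)
        (ENNReal.rpow_ne_top_of_nonneg (by positivity) hUfin))
        (ENNReal.mul_ne_top (ENNReal.mul_ne_top ENNReal.ofReal_ne_top hA)
        (ENNReal.rpow_ne_top_of_nonneg (by positivity) hOfin)),
      ENNReal.toReal_add hUfin hOfin, ENNReal.toReal_mul, ENNReal.toReal_mul,
      ENNReal.toReal_mul, ENNReal.toReal_mul,
      ENNReal.toReal_ofReal hs.le, ENNReal.toReal_ofReal (by positivity : (0:ℝ) ≤ p / (p-1)),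
      ← ENNReal.toReal_rpow, ← ENNReal.toReal_rpow] at h
    calc s * (m + q') ≤ p / (p-1) * a * m ^ α + p / (p-1) * a * q' ^ α := h
      _ = p / (p - 1) * a * (m ^ α + q' ^ α) := by ring
  have hfinal : s * m ^ (1/p) ≤ C * a := L3 hp hC hroot hs ha0 hq'0 hq'm hreal
  -- conclude
  have hm_le : m ≤ (C * a / s) ^ p := by
    have h1 : m ^ (1/p) ≤ C * a / s := by
      rw [le_div_iff₀ hs]
      linarith [hfinal]
    have h2 : (m ^ (1/p)) ^ p ≤ (C * a / s) ^ p :=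
      Real.rpow_le_rpow (Real.rpow_nonneg ENNReal.toReal_nonneg _) h1 hp0.le
    calc m = (m ^ (1/p)) ^ p := by
          rw [← Real.rpow_mul ENNReal.toReal_nonneg, one_div,
            inv_mul_cancel₀ hp0.ne', Real.rpow_one]
      _ ≤ (C * a / s) ^ p := h2
  calc μ (⋃ q ∈ F, Ioo q.1 q.2) = μ U := by rw [hSun]
    _ = ENNReal.ofReal m := (ENNReal.ofReal_toReal hUfin).symm
    _ ≤ ENNReal.ofReal ((C * a / s) ^ p) := ENNReal.ofReal_le_ofReal hm_le
    _ = (ENNReal.ofReal (C * a / s)) ^ p := by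
        rw [← ENNReal.ofReal_rpow_of_nonneg (by positivity) hp0.le]
    _ = (ENNReal.ofReal C * A / ENNReal.ofReal s) ^ p := by
        congr 1
        rw [ENNReal.ofReal_div_of_pos hs, ENNReal.ofReal_mul hC.le, ha,
          ENNReal.ofReal_toReal hA]

/-- `‖M_μ f‖_{L^{p,∞}(dμ)} ≤ C_p ‖f‖_{L^{p,∞}(dμ)}` where `C_p` is
the unique positive root of `(p-1)x^p - p x^(p-1) - 1 = 0`. -/
theorem stmt_2 (p : ℝ) (hp : 1 < p) (C : ℝ) (hC : 0 < C)
    (hroot : (p - 1) * C ^ p - p * C ^ (p - 1) - 1 = 0)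
    (μ : Measure ℝ) (f : ℝ → ℝ) (hf : Measurable f) :
    wnormE μ (maximal μ f) p ≤ ENNReal.ofReal C * wnorm' μ f p := by
  have hp0 : (0:ℝ) < p := by linarith
  set A : ℝ≥0∞ := wnorm' μ f p with hAdef
  rw [wnormE]
  apply iSup₂_le
  intro s hs
  rcases eq_or_ne A ⊤ with hA | hA
  · rw [hA, ENNReal.mul_top (ENNReal.ofReal_pos.2 hC).ne']
    exact le_top
  -- weak-type information on f
  have hwA : ∀ t : ℝ, 0 < t →
      ENNReal.ofReal t * μ {x | ENNReal.ofReal t < ENNReal.ofReal |f x|} ^ (1/p) ≤ A := by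
    intro t ht
    rw [hAdef, wnorm', wnormE]
    exact le_iSup₂ (f := fun (t : ℝ) (_ : 0 < t) =>
      ENNReal.ofReal t * μ {x | ENNReal.ofReal t < ENNReal.ofReal |f x|} ^ (1/p)) t ht
  have hweak : ∀ t : ℝ, 0 < t → μ {y | t < |f y|} ≤ (A / ENNReal.ofReal t) ^ p := by
    intro t ht
    have hset : {y | t < |f y|} = {x | ENNReal.ofReal t < ENNReal.ofReal |f x|} := by
      ext x
      simp [ENNReal.ofReal_lt_ofReal_iff_of_nonneg ht.le]
    rw [hset]
    set M : ℝ≥0∞ := μ {x | ENNReal.ofReal t < ENNReal.ofReal |f x|} with hM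
    have h1 : M ^ (1/p) ≤ A / ENNReal.ofReal t := by
      rw [ENNReal.le_div_iff_mul_le (Or.inl (ENNReal.ofReal_pos.2 ht).ne')
        (Or.inl ENNReal.ofReal_ne_top)]
      rw [mul_comm]
      exact hwA t ht
    calc M = (M ^ (1/p)) ^ p := by
          rw [← ENNReal.rpow_mul, one_div, inv_mul_cancel₀ hp0.ne', ENNReal.rpow_one]
      _ ≤ (A / ENNReal.ofReal t) ^ p := ENNReal.rpow_le_rpow h1 hp0.le
  -- witnesses
  set g : ℝ → ℝ≥0∞ := fun y => ENNReal.ofReal |f y| with hg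
  set Wit : ℝ × ℝ → Prop := fun q => μ (Ioo q.1 q.2) ≠ 0 ∧ μ (Ioo q.1 q.2) ≠ ⊤ ∧
    ENNReal.ofReal s * μ (Ioo q.1 q.2) ≤ ∫⁻ y in Ioo q.1 q.2, ENNReal.ofReal |f y| ∂μ
    with hWit
  have hE : {x | ENNReal.ofReal s < maximal μ f x} ⊆ ⋃ (i : {q : ℝ × ℝ // Wit q}), Ioo i.1.1 i.1.2 := by
    intro x hx
    simp only [mem_setOf_eq, maximal, maximalE] at hx
    rw [lt_iSup_iff] at hx
    obtain ⟨a, hx⟩ := hx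
    rw [lt_iSup_iff] at hx
    obtain ⟨b, hx⟩ := hx
    rw [lt_iSup_iff] at hx
    obtain ⟨hmem, hx⟩ := hx
    rw [lt_iSup_iff] at hx
    obtain ⟨hpos, hx⟩ := hx
    have hne0 : μ (Ioo a b) ≠ 0 := hpos.ne'
    have htop : μ (Ioo a b) ≠ ⊤ := by
      intro h
      rw [h, ENNReal.inv_top, zero_mul] at hx
      simp at hx
    have hle : ENNReal.ofReal s * μ (Ioo a b) ≤ ∫⁻ y in Ioo a b, ENNReal.ofReal |f y| ∂μ := by
      have h2 := mul_le_mul_left hx.le (μ (Ioo a b))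
      calc ENNReal.ofReal s * μ (Ioo a b) ≤
          (μ (Ioo a b))⁻¹ * (∫⁻ y in Ioo a b, ENNReal.ofReal |f y| ∂μ) * μ (Ioo a b) := h2
        _ = ((μ (Ioo a b))⁻¹ * μ (Ioo a b)) * ∫⁻ y in Ioo a b, ENNReal.ofReal |f y| ∂μ := by
            ring
        _ = ∫⁻ y in Ioo a b, ENNReal.ofReal |f y| ∂μ := by
            rw [ENNReal.inv_mul_cancel hne0 htop, one_mul]
    exact Set.mem_iUnion.2 ⟨⟨(a, b), hne0, htop, hle⟩, hmem⟩
  -- countable subfamily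
  obtain ⟨T, hTc, hTun⟩ := TopologicalSpace.isOpen_iUnion_countable
    (fun i : {q : ℝ × ℝ // Wit q} => Ioo i.1.1 i.1.2) (fun i => isOpen_Ioo)
  set B : ℝ≥0∞ := (ENNReal.ofReal C * A / ENNReal.ofReal s) ^ p with hB
  have hcore : μ (⋃ (i : {q : ℝ × ℝ // Wit q}), Ioo i.1.1 i.1.2) ≤ B := by
    rw [← hTun]
    rcases Set.eq_empty_or_nonempty T with hT | hT
    · simp [hT]
    · obtain ⟨e, hTe⟩ := (Set.Countable.exists_eq_range hTc hT)
      rw [hTe]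
      have hrw : ⋃ i ∈ Set.range e, Ioo i.1.1 i.1.2 = ⋃ n : ℕ, Ioo (e n).1.1 (e n).1.2 := by
        rw [Set.biUnion_range]
      rw [hrw, measure_iUnion_eq_iSup_accumulate]
      apply iSup_le
      intro N
      have hacc : Set.accumulate (fun n : ℕ => Ioo (e n).1.1 (e n).1.2) N =
          ⋃ q ∈ (Finset.range (N+1)).image (fun n => (e n).1), Ioo q.1 q.2 := by
        rw [Set.accumulate_def]
        ext x
        simp only [Set.mem_iUnion₂, Finset.mem_image, Finset.mem_range, Set.mem_iUnion]
        constructor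
        · rintro ⟨n, hn, hx⟩
          exact ⟨(e n).1, ⟨n, by omega, rfl⟩, hx⟩
        · rintro ⟨q, ⟨n, hn, rfl⟩, hx⟩
          exact ⟨n, by omega, hx⟩
      rw [hacc]
      apply Lcore hp hC hroot μ hf hA hweak hs
      intro q hq
      rw [Finset.mem_image] at hq
      obtain ⟨n, hn, rfl⟩ := hq
      exact (e n).2
  have hEb : μ {x | ENNReal.ofReal s < maximal μ f x} ≤ B :=
    (measure_mono hE).trans hcore
  calc ENNReal.ofReal s * μ {x | ENNReal.ofReal s < maximal μ f x} ^ (1/p)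
      ≤ ENNReal.ofReal s * B ^ (1/p) :=
        mul_le_mul_right (ENNReal.rpow_le_rpow hEb (by positivity)) _
    _ = ENNReal.ofReal s * (ENNReal.ofReal C * A / ENNReal.ofReal s) := by
        rw [hB, ← ENNReal.rpow_mul, mul_one_div_cancel hp0.ne', ENNReal.rpow_one]
    _ = ENNReal.ofReal C * A := ENNReal.mul_div_cancel (ENNReal.ofReal_pos.2 hs).ne' ENNReal.ofReal_ne_top
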